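/- Let G be a finite group such that every maximal subgroup of G is an ICΦ-subgroup of G. Then G is nilpotent. -/

import Mathlib

open Subgroup Pointwise
open scoped commutatorElement

section ICPhiAux

variable {G : Type*} [Group G]

/-- `⁅H, ⊤⁆` is always normal. -/
lemma aux_commutator_top_normal (H : Subgroup G) : (⁅H, (⊤ : Subgroup G)⁆).Normal := by
  constructor
  intro n hn g
  have hmap : Subgroup.map (MulAut.conj g).toMonoidHom ⁅H, (⊤ : Subgroup G)⁆ ≤
      ⁅H, (⊤ : Subgroup G)⁆ := by
    rw [Subgroup.map_commutator, Subgroup.commutator_le]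
    rintro a ⟨m, hm, rfl⟩ x _
    have hx : ⁅(MulAut.conj g).toMonoidHom m, x⁆ = ⁅m, g⁆⁻¹ * ⁅m, x * g⁆ := by
      simp only [MulEquiv.coe_toMonoidHom, MulAut.conj_apply, commutatorElement_def]
      group
    rw [hx]
    exact mul_mem (inv_mem (Subgroup.commutator_mem_commutator hm (Subgroup.mem_top g)))
      (Subgroup.commutator_mem_commutator hm (Subgroup.mem_top (x * g)))
  exact hmap ⟨n, hn, by simp [MulAut.conj_apply]⟩

/-- A subgroup containing the commutator subgroup is normal. -/
lemma aux_normal_of_commutator_le {M : Subgroup G} (h : commutator G ≤ M) : M.Normal := by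
  constructor
  intro n hn g
  have hc : ⁅g, n⁆ ∈ M := by
    apply h
    rw [_root_.commutator_def]
    exact Subgroup.commutator_mem_commutator (Subgroup.mem_top g) (Subgroup.mem_top n)
  have he : g * n * g⁻¹ = ⁅g, n⁆ * n := by group
  rw [he]
  exact mul_mem hc hn

/-- The quotient by a normal coatom is cyclic. -/
lemma aux_quotient_cyclic {M : Subgroup G} [M.Normal] (hM : IsCoatom M) :
    IsCyclic (G ⧸ M) := by
  obtain ⟨g, -, hg⟩ := SetLike.exists_of_lt (lt_top_iff_ne_top.mpr hM.1)
  have h1 : M < (Subgroup.zpowers ((g : G ⧸ M))).comap (QuotientGroup.mk' M) := by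
    refine lt_of_le_of_ne ?_ ?_
    · intro m hm
      rw [Subgroup.mem_comap]
      have : ((QuotientGroup.mk' M) m) = 1 := (QuotientGroup.eq_one_iff m).mpr hm
      rw [this]
      exact one_mem _
    · intro hEq
      apply hg
      rw [hEq]
      rw [Subgroup.mem_comap]
      exact Subgroup.mem_zpowers _
  have h2 := hM.2 _ h1
  constructor
  refine ⟨(g : G ⧸ M), fun x => ?_⟩
  obtain ⟨y, rfl⟩ := QuotientGroup.mk'_surjective M x
  have : y ∈ (Subgroup.zpowers ((g : G ⧸ M))).comap (QuotientGroup.mk' M) := by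
    rw [h2]; exact Subgroup.mem_top y
  exact this

/-- If `U` is a normal coatom, then `commutator G ≤ ⁅U, ⊤⁆`. -/
lemma aux_commutator_le_of_coatom {U : Subgroup G} [U.Normal] (hU : IsCoatom U) :
    commutator G ≤ ⁅U, (⊤ : Subgroup G)⁆ := by
  haveI := aux_quotient_cyclic hU
  set K := ⁅U, (⊤ : Subgroup G)⁆ with hK
  haveI : K.Normal := aux_commutator_top_normal U
  have hKU : K ≤ U := Subgroup.commutator_le_left U ⊤
  let f : G ⧸ K →* G ⧸ U := QuotientGroup.map K U (MonoidHom.id G) (by simpa using hKU)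
  have hker : f.ker ≤ Subgroup.center (G ⧸ K) := by
    intro x hx
    obtain ⟨y, rfl⟩ := QuotientGroup.mk'_surjective K x
    have hyU : y ∈ U := by
      have h1 : ((y : G) : G ⧸ U) = 1 := hx
      exact (QuotientGroup.eq_one_iff y).mp h1
    rw [Subgroup.mem_center_iff]
    intro z
    obtain ⟨w, rfl⟩ := QuotientGroup.mk'_surjective K z
    have hmem : ⁅y, w⁆ ∈ K := Subgroup.commutator_mem_commutator hyU (Subgroup.mem_top w)
    have h2 : ((⁅y, w⁆ : G) : G ⧸ K) = 1 := (QuotientGroup.eq_one_iff _).mpr hmem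
    have h3 : ⁅((y : G) : G ⧸ K), ((w : G) : G ⧸ K)⁆ = 1 := by
      rw [← h2]; rfl
    exact (commutatorElement_eq_one_iff_mul_comm.mp h3).symm
  have hcomm := commutative_of_cyclic_center_quotient f hker
  rw [_root_.commutator_def, Subgroup.commutator_le]
  intro a _ b _
  rw [← QuotientGroup.eq_one_iff (N := K)]
  have : ((⁅a, b⁆ : G) : G ⧸ K) = ⁅((a : G) : G ⧸ K), ((b : G) : G ⧸ K)⁆ := rfl
  rw [this]
  exact commutatorElement_eq_one_iff_mul_comm.mpr (hcomm _ _)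

/-- Gaschütz: for `U` normal in a finite group, `Φ(U) ≤ Φ(G)`. -/
lemma aux_gaschutz [Finite G] (U : Subgroup G) [U.Normal] :
    (frattini ↥U).map U.subtype ≤ frattini G := by
  have key : ∀ M : Subgroup G, IsCoatom M → (frattini ↥U).map U.subtype ≤ M := by
    intro M hM
    by_contra hnot
    set Φ : Subgroup G := (frattini ↥U).map U.subtype with hΦ
    haveI : Φ.Normal := inferInstance
    have hsup : Φ ⊔ M = ⊤ := by
      refine hM.2 _ (lt_of_le_of_ne le_sup_right ?_)
      intro hEq
      exact hnot (hEq ▸ le_sup_left)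
    have hΦU : Φ ≤ U := Subgroup.map_subtype_le _
    have hUle : U ≤ Φ ⊔ (U ⊓ M) := by
      intro u hu
      have hmem : u ∈ (Φ : Set G) * (M : Set G) := by
        rw [← Subgroup.normal_mul, hsup]
        exact Subgroup.mem_top u
      obtain ⟨a, ha, b, hb, rfl⟩ := hmem
      have hbU : b ∈ U := by
        have := mul_mem (inv_mem (hΦU ha)) hu
        simpa using this
      exact mul_mem (le_sup_left (a := Φ) ha)
        (le_sup_right (b := U ⊓ M) (Subgroup.mem_inf.mpr ⟨hbU, hb⟩))
    have hsup2 : (U ⊓ M).subgroupOf U ⊔ frattini ↥U = ⊤ := by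
      apply Subgroup.map_injective U.subtype_injective
      rw [Subgroup.map_sup, Subgroup.subgroupOf_map_subtype, ← MonoidHom.range_eq_map,
        Subgroup.range_subtype]
      refine le_antisymm (sup_le (le_trans inf_le_left inf_le_left) hΦU) ?_
      have : Φ ⊔ (U ⊓ M) ≤ U ⊓ M ⊓ U ⊔ Φ := by
        rw [sup_comm]
        apply sup_le_sup_right
        intro x hx
        exact Subgroup.mem_inf.mpr ⟨hx, (Subgroup.mem_inf.mp hx).1⟩
      exact le_trans hUle this
    have htop := frattini_nongenerating hsup2
    have hUM : U ≤ M := by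
      intro u hu
      have : (⟨u, hu⟩ : ↥U) ∈ (U ⊓ M).subgroupOf U := by
        rw [htop]; trivial
      exact (Subgroup.mem_inf.mp (Subgroup.mem_subgroupOf.mp this)).2
    exact hnot (hΦU.trans hUM)
  rw [frattini, Order.radical]
  exact le_iInf fun M => le_iInf fun hM => key M hM

end ICPhiAux

/-- `H` is an `ICΦ`-subgroup of `G` if `H ∩ [H,G] ≤ Φ(H)`. -/
def IsICPhi {G : Type*} [Group G] (H : Subgroup G) : Prop :=
  H ⊓ ⁅H, (⊤ : Subgroup G)⁆ ≤ (frattini ↥H).map H.subtype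

theorem stmt12 {G : Type*} [Group G] [Finite G]
    (h : ∀ M : Subgroup G, IsCoatom M → IsICPhi M) : Group.IsNilpotent G := by
  obtain h1 | h1 := subsingleton_or_nontrivial G
  · infer_instance
  have hbotne : (⊥ : Subgroup G) ≠ ⊤ := by
    intro hbt
    obtain ⟨x, hx⟩ := exists_ne (1 : G)
    have : x ∈ (⊥ : Subgroup G) := by rw [hbt]; trivial
    exact hx (by simpa using this)
  have key : commutator G ≤ frattini G := by
    rcases eq_or_ne (commutator G) ⊤ with hc | hc
    · exfalso
      obtain ⟨M, hM⟩ : ∃ M : Subgroup G, IsCoatom M := by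
        rcases eq_top_or_exists_le_coatom (⊥ : Subgroup G) with h' | ⟨M, hM, -⟩
        · exact absurd h' hbotne
        · exact ⟨M, hM⟩
      set K := ⁅M, (⊤ : Subgroup G)⁆ with hKdef
      haveI : K.Normal := aux_commutator_top_normal M
      by_cases hKM : K ≤ M
      · haveI hMn : M.Normal := by
          constructor
          intro n hn g
          have he : g * n * g⁻¹ = n * ⁅n⁻¹, g⁆ := by group
          rw [he]
          exact mul_mem hn
            (hKM (Subgroup.commutator_mem_commutator (inv_mem hn) (Subgroup.mem_top g)))
        haveI := aux_quotient_cyclic hM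
        have hcomm := commutative_of_cyclic_center_quotient (MonoidHom.id (G ⧸ M))
          (by
            intro x hx
            have hx1 : x = 1 := hx
            rw [hx1]
            exact Subgroup.one_mem _)
        have hle : commutator G ≤ M := by
          rw [_root_.commutator_def, Subgroup.commutator_le]
          intro a _ b _
          rw [← QuotientGroup.eq_one_iff (N := M)]
          have : ((⁅a, b⁆ : G) : G ⧸ M) = ⁅((a : G) : G ⧸ M), ((b : G) : G ⧸ M)⁆ := rfl
          rw [this]
          exact commutatorElement_eq_one_iff_mul_comm.mpr (hcomm _ _)
        rw [hc] at hle
        exact hM.1 (top_le_iff.mp hle)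
      · have hsup : M ⊔ K = ⊤ := by
          refine hM.2 _ (lt_of_le_of_ne le_sup_left ?_)
          intro hEq
          exact hKM (hEq ▸ le_sup_right)
        have hcen : ∀ a b : G, ⁅a, b⁆ ∈ K := by
          have hmapM : Subgroup.map (QuotientGroup.mk' K) M = ⊤ := by
            have hh1 : Subgroup.comap (QuotientGroup.mk' K)
                (Subgroup.map (QuotientGroup.mk' K) M) = M ⊔ K := by
              rw [Subgroup.comap_map_eq, QuotientGroup.ker_mk']
            have hh2 := congrArg (Subgroup.map (QuotientGroup.mk' K)) hh1
            rw [Subgroup.map_comap_eq_self_of_surjective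
              (QuotientGroup.mk'_surjective K), hsup] at hh2
            rw [hh2, ← MonoidHom.range_eq_map, MonoidHom.range_eq_top]
            exact QuotientGroup.mk'_surjective K
          have hcenter : ∀ x : G ⧸ K, x ∈ Subgroup.center (G ⧸ K) := by
            intro x
            have hx : x ∈ Subgroup.map (QuotientGroup.mk' K) M := by
              rw [hmapM]; trivial
            obtain ⟨m, hm, rfl⟩ := hx
            rw [Subgroup.mem_center_iff]
            intro z
            obtain ⟨w, rfl⟩ := QuotientGroup.mk'_surjective K z
            have hmem : ⁅m, w⁆ ∈ K := Subgroup.commutator_mem_commutator hm (Subgroup.mem_top w)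
            have h2 : ((⁅m, w⁆ : G) : G ⧸ K) = 1 := (QuotientGroup.eq_one_iff _).mpr hmem
            have h3 : ⁅((m : G) : G ⧸ K), ((w : G) : G ⧸ K)⁆ = 1 := by rw [← h2]; rfl
            exact (commutatorElement_eq_one_iff_mul_comm.mp h3).symm
          intro a b
          rw [← QuotientGroup.eq_one_iff (N := K)]
          have : ((⁅a, b⁆ : G) : G ⧸ K) = ⁅((a : G) : G ⧸ K), ((b : G) : G ⧸ K)⁆ := rfl
          rw [this]
          exact commutatorElement_eq_one_iff_mul_comm.mpr
            (Subgroup.mem_center_iff.mp (hcenter _) _).symm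
        have hKtop : K = ⊤ := by
          rw [← hc, _root_.commutator_def]
          refine le_antisymm ?_ ?_
          · exact hKdef ▸ Subgroup.commutator_mono le_top le_top
          · rw [Subgroup.commutator_le]
            intro a _ b _
            exact hcen a b
        have hM2 : M ≤ (frattini ↥M).map M.subtype := by
          have := h M hM
          rw [IsICPhi, ← hKdef, hKtop, inf_top_eq] at this
          exact this
        have hfr : frattini ↥M = ⊤ := by
          have h2 := Subgroup.comap_mono (f := M.subtype) hM2
          rw [Subgroup.comap_map_eq_self_of_injective M.subtype_injective] at h2
          refine top_le_iff.mp (le_trans ?_ h2)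
          intro x _
          rw [Subgroup.mem_comap]
          exact x.2
        by_cases hMbot : M = ⊥
        · obtain ⟨x, hx⟩ := exists_ne (1 : G)
          have hxz : Subgroup.zpowers x = ⊤ := by
            refine hM.2 _ ?_
            rw [hMbot]
            refine lt_of_le_of_ne bot_le ?_
            intro hb
            exact hx (Subgroup.zpowers_eq_bot.mp hb.symm)
          haveI : IsCyclic G := ⟨⟨x, fun y => by
            have hy : y ∈ Subgroup.zpowers x := by rw [hxz]; exact Subgroup.mem_top y
            exact hy⟩⟩
          have hcomm := commutative_of_cyclic_center_quotient (MonoidHom.id G)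
            (by
              intro z hz
              have hz1 : z = 1 := hz
              rw [hz1]
              exact Subgroup.one_mem _)
          have hcb : commutator G ≤ (⊥ : Subgroup G) := by
            rw [_root_.commutator_def, Subgroup.commutator_le]
            intro a _ b _
            rw [Subgroup.mem_bot]
            exact commutatorElement_eq_one_iff_mul_comm.mpr (hcomm a b)
          rw [hc] at hcb
          exact hbotne (le_antisymm bot_le hcb)
        · haveI : Nontrivial ↥M := (Subgroup.nontrivial_iff_ne_bot M).mpr hMbot
          obtain ⟨C, hC, -⟩ := (eq_top_or_exists_le_coatom (⊥ : Subgroup ↥M)).resolve_left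
            (by
              intro hbt
              obtain ⟨x, hx⟩ := exists_ne (1 : ↥M)
              have : x ∈ (⊥ : Subgroup ↥M) := by rw [hbt]; trivial
              exact hx (by simpa using this))
          have hCle : frattini ↥M ≤ C := frattini_le_coatom hC
          rw [hfr] at hCle
          exact hC.1 (top_le_iff.mp hCle)
    · obtain ⟨U, hU, hle⟩ := (eq_top_or_exists_le_coatom (commutator G)).resolve_left hc
      haveI : U.Normal := aux_normal_of_commutator_le hle
      calc commutator G ≤ ⁅U, (⊤ : Subgroup G)⁆ := aux_commutator_le_of_coatom hU
        _ = U ⊓ ⁅U, (⊤ : Subgroup G)⁆ :=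
          (inf_eq_right.mpr (Subgroup.commutator_le_left U ⊤)).symm
        _ ≤ (frattini ↥U).map U.subtype := h U hU
        _ ≤ frattini G := aux_gaschutz U
  have hnorm : ∀ M : Subgroup G, IsCoatom M → M.Normal := fun M hM =>
    aux_normal_of_commutator_le (key.trans (frattini_le_coatom hM))
  exact ((isNilpotent_of_finite_tfae (G := G)).out 2 0).mp hnorm
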